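/- For every integer n ≥ 4, every 2-coloring c of the pairs (i,j) with 1 ≤ i < j ≤ n, and every integer k with 0 ≤ k < n/2 − 1, the inequality E_{≤k}(c,c₁) ≥ binom(k+2,2) holds, where c₁ is the restriction of c to the pairs (i,j) with 1 ≤ i < j ≤ n−1. -/

import Mathlib

/-- Number of crossings of a 2-page book drawing of `K n`, encoded as a
2-coloring `c` of the pairs `(i,j)` with `1 ≤ i < j ≤ n` (edge `ij` is drawn in the
page given by `c i j`).  Edges `(i,j)` and `(k,l)` cross iff `i < k < j < l` and
they have the same color. -/
def crossings (n : ℕ) (c : ℕ → ℕ → Bool) : ℕ :=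
  ((((Finset.Icc 1 n) ×ˢ (Finset.Icc 1 n)) ×ˢ ((Finset.Icc 1 n) ×ˢ (Finset.Icc 1 n))).filter
    (fun p => p.1.1 < p.2.1 ∧ p.2.1 < p.1.2 ∧ p.1.2 < p.2.2 ∧
      c p.1.1 p.1.2 = c p.2.1 p.2.2)).card

/-- The Hill/Guy quantity `Z n = (1/4)⌊n/2⌋⌊(n-1)/2⌋⌊(n-2)/2⌋⌊(n-3)/2⌋`. -/
def Z (n : ℕ) : ℕ := (n / 2) * ((n - 1) / 2) * ((n - 2) / 2) * ((n - 3) / 2) / 4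

/-- `s(i,j)`: the number of `l < i` with `c l j = c i j` plus the number of
`j < l ≤ n` with `c i l = c i j`. -/
def sDeg (n : ℕ) (c : ℕ → ℕ → Bool) (i j : ℕ) : ℕ :=
  ((Finset.Ico 1 i).filter (fun l => c l j = c i j)).card +
  ((Finset.Ioc j n).filter (fun l => c i l = c i j)).card

/-- The edge `(i,j)` is a `kVal n c i j`-edge: `min (s(i,j), n - 2 - s(i,j))`. -/
def kVal (n : ℕ) (c : ℕ → ℕ → Bool) (i j : ℕ) : ℕ :=
  min (sDeg n c i j) (n - 2 - sDeg n c i j)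

/-- `E_k(c)`: the number of `k`-edges of `c`. -/
def Ek (n : ℕ) (c : ℕ → ℕ → Bool) (k : ℕ) : ℕ :=
  (((Finset.Icc 1 n) ×ˢ (Finset.Icc 1 n)).filter
    (fun p => p.1 < p.2 ∧ kVal n c p.1 p.2 = k)).card

/-- `E_{≤k}(c) = Σ_{j=0}^{k} E_j(c)`. -/
def Eleq (n : ℕ) (c : ℕ → ℕ → Bool) (k : ℕ) : ℕ :=
  ∑ j ∈ Finset.range (k + 1), Ek n c j

/-- `E_{≤≤k}(c) = Σ_{j=0}^{k} E_{≤j}(c)`. -/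
def Eleqleq (n : ℕ) (c : ℕ → ℕ → Bool) (k : ℕ) : ℕ :=
  ∑ j ∈ Finset.range (k + 1), Eleq n c j

/-- `E_{≤k}(c, c₁)`: the number of `(c,c₁)`-invariant `(≤ k)`-edges, where `c₁` is the
restriction of `c` to `K_{n-1}` (deleting the rightmost vertex `n`): edges `(i,j)` with
`j ≤ n - 1` that are `j'`-edges of both `c` (in `K_n`) and `c₁` (in `K_{n-1}`) for some `j' ≤ k`. -/
def EleqInv (n : ℕ) (c : ℕ → ℕ → Bool) (k : ℕ) : ℕ :=
  (((Finset.Icc 1 (n - 1)) ×ˢ (Finset.Icc 1 (n - 1))).filter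
    (fun p => p.1 < p.2 ∧ kVal n c p.1 p.2 = kVal (n - 1) c p.1 p.2 ∧
      kVal n c p.1 p.2 ≤ k)).card

/-- A 2-coloring is crossing optimal if it minimizes the number of crossings. -/
def IsOptimal (n : ℕ) (c : ℕ → ℕ → Bool) : Prop :=
  ∀ c' : ℕ → ℕ → Bool, crossings n c ≤ crossings n c'

/-- The spine convention: the edges `(i,i+1)` and the edge `(1,n)` are blue (`true`). -/
def SpineConvention (n : ℕ) (c : ℕ → ℕ → Bool) : Prop :=
  (∀ i, 1 ≤ i → i + 1 ≤ n → c i (i + 1) = true) ∧ c 1 n = true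

/-- The cyclic-shift transformation `f`. -/
def fT (n : ℕ) (c : ℕ → ℕ → Bool) : ℕ → ℕ → Bool :=
  fun i j => if j < n then c (i + 1) (j + 1) else c 1 (i + 1)

/-- The vertical-reflection transformation `g`. -/
def gT (n : ℕ) (c : ℕ → ℕ → Bool) : ℕ → ℕ → Bool :=
  fun i j => c (n + 1 - j) (n + 1 - i)

/-- The page-exchange transformation `h` (keeping the spine edges and `(1,n)` fixed). -/
def hT (n : ℕ) (c : ℕ → ℕ → Bool) : ℕ → ℕ → Bool :=
  fun i j => if j = i + 1 ∨ (i = 1 ∧ j = n) then c i j else !(c i j)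

/-- Two colorings are equivalent if `c' = h^a ∘ g^b ∘ f^m (c)` for some
`a, b ∈ {0,1}` and `0 ≤ m ≤ n - 1`. -/
def EquivCol (n : ℕ) (c c' : ℕ → ℕ → Bool) : Prop :=
  ∃ (a b : Bool) (m : ℕ), m ≤ n - 1 ∧
    ∀ i j, 1 ≤ i → i < j → j ≤ n →
      c' i j = (if a then hT n else id) ((if b then gT n else id) ((fT n)^[m] c)) i j

/-- The position (starting from 1) of the entry `(i,l)` in the order associated to the
entry `(i,j)`: first all entries `(i,l')`, `i < l' < j`, with `c i l' ≠ c i j` in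
decreasing order of `l'`, then all entries with `c i l' = c i j` in increasing order. -/
def orderPos (c : ℕ → ℕ → Bool) (i j l : ℕ) : ℕ :=
  if c i l ≠ c i j then
    ((Finset.Ioo i j).filter (fun l' => l ≤ l' ∧ c i l' ≠ c i j)).card
  else
    ((Finset.Ioo i j).filter (fun l' => c i l' ≠ c i j)).card +
    ((Finset.Ioo i j).filter (fun l' => l' ≤ l ∧ c i l' = c i j)).card

/-- The edge `(i,j)` (with `i < j`) is crossed by some other edge of the drawing. -/
def Crossed (n : ℕ) (c : ℕ → ℕ → Bool) (i j : ℕ) : Prop :=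
  ∃ k l, 1 ≤ k ∧ k < l ∧ l ≤ n ∧
    ((i < k ∧ k < j ∧ j < l ∧ c i j = c k l) ∨
     (k < i ∧ i < l ∧ l < j ∧ c i j = c k l))

namespace Inv8

/-- number of `l ∈ (j,n]` with `c i l ≠ c i n`. -/
def dc (n : ℕ) (c : ℕ → ℕ → Bool) (i j : ℕ) : ℕ :=
  ((Finset.Ioc j n).filter (fun l => ¬ (c i l = c i n))).card

/-- rank of `j` in the order: first the different-colored (from `c i n`) in decreasing
order, then the same-colored in increasing order. -/
def rnk (n : ℕ) (c : ℕ → ℕ → Bool) (i j : ℕ) : ℕ :=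
  if c i j = c i n then j - i - 1 + dc n c i j else dc n c i j

lemma dc_split (n : ℕ) (c : ℕ → ℕ → Bool) (i : ℕ) {j j' : ℕ} (h1 : j ≤ j') (h2 : j' ≤ n) :
    dc n c i j
      = ((Finset.Ioc j j').filter (fun l => ¬ (c i l = c i n))).card + dc n c i j' := by
  unfold dc
  rw [← Finset.Ioc_union_Ioc_eq_Ioc h1 h2, Finset.filter_union,
    Finset.card_union_of_disjoint]
  rw [Finset.disjoint_left]
  intro a ha hb
  simp only [Finset.mem_filter, Finset.mem_Ioc] at ha hb
  omega

lemma mid_ge_one {n : ℕ} {c : ℕ → ℕ → Bool} {i j j' : ℕ} (h1 : j < j') (h2 : j' ≤ n)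
    (h : ¬ (c i j' = c i n)) :
    1 ≤ ((Finset.Ioc j j').filter (fun l => ¬ (c i l = c i n))).card := by
  apply Finset.card_pos.mpr
  exact ⟨j', by simp [Finset.mem_filter, Finset.mem_Ioc, h1, h]⟩

lemma mid_le {n : ℕ} {c : ℕ → ℕ → Bool} {i j j' : ℕ} (h1 : j < j')
    (h : c i j' = c i n) :
    ((Finset.Ioc j j').filter (fun l => ¬ (c i l = c i n))).card ≤ j' - j - 1 := by
  have hsub : ((Finset.Ioc j j').filter (fun l => ¬ (c i l = c i n))) ⊆ Finset.Ioo j j' := by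
    intro l hl
    simp only [Finset.mem_filter, Finset.mem_Ioc] at hl
    have : l ≠ j' := by rintro rfl; exact hl.2 h
    simp only [Finset.mem_Ioo]
    omega
  calc _ ≤ (Finset.Ioo j j').card := Finset.card_le_card hsub
    _ = j' - j - 1 := by rw [Nat.card_Ioo]

lemma mid_le' {n : ℕ} {c : ℕ → ℕ → Bool} {i j j' : ℕ} :
    ((Finset.Ioc j j').filter (fun l => ¬ (c i l = c i n))).card ≤ j' - j := by
  calc _ ≤ (Finset.Ioc j j').card := Finset.card_filter_le _ _
    _ = j' - j := by rw [Nat.card_Ioc]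

lemma dc_le {n : ℕ} (c : ℕ → ℕ → Bool) (i j : ℕ) : dc n c i j ≤ n - j := by
  calc _ ≤ (Finset.Ioc j n).card := Finset.card_filter_le _ _
    _ = n - j := by rw [Nat.card_Ioc]

lemma rnk_ne {n : ℕ} {c : ℕ → ℕ → Bool} {i j j' : ℕ} (hij : i < j) (hjj : j < j')
    (hjn : j' ≤ n) : rnk n c i j ≠ rnk n c i j' := by
  have hsplit := dc_split n c i (le_of_lt hjj) hjn
  set e := ((Finset.Ioc j j').filter (fun l => ¬ (c i l = c i n))).card with he
  unfold rnk
  by_cases h1 : c i j = c i n <;> by_cases h2 : c i j' = c i n <;> simp only [h1, h2,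
    if_true, if_false, ite_true, ite_false]
  · -- both same-colored : rnk j < rnk j'
    have := mid_le (n := n) (c := c) (i := i) hjj h2
    omega
  · -- j same, j' diff : rnk j' = dc j' < rnk j
    have := mid_ge_one (n := n) (c := c) (i := i) hjj hjn h2
    omega
  · -- j diff, j' same : rnk j = e + dc j' ≤ j'-j-1 + dc j' < j'-i-1 + dc j'
    have := mid_le (n := n) (c := c) (i := i) hjj h2
    omega
  · -- both diff : rnk j > rnk j'
    have := mid_ge_one (n := n) (c := c) (i := i) hjj hjn h2
    omega

lemma rnk_injOn (n : ℕ) (c : ℕ → ℕ → Bool) (i : ℕ) :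
    Set.InjOn (rnk n c i) (Finset.Ioc i n) := by
  intro a ha b hb hab
  simp only [Finset.coe_Ioc, Set.mem_Ioc] at ha hb
  rcases lt_trichotomy a b with h | h | h
  · exact absurd hab (rnk_ne ha.1 h hb.2)
  · exact h
  · exact absurd hab.symm (rnk_ne hb.1 h ha.2)

lemma rnk_lt {n : ℕ} {c : ℕ → ℕ → Bool} {i j : ℕ} (hij : i < j) (hjn : j ≤ n) :
    rnk n c i j < n - i := by
  have := dc_le (n := n) c i j
  unfold rnk
  split <;> omega

lemma card_small (n : ℕ) (c : ℕ → ℕ → Bool) (i K : ℕ) (hK : K + 1 ≤ n - i) :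
    ((Finset.Ioc i n).filter (fun j => rnk n c i j ≤ K)).card = K + 1 := by
  have himg : (Finset.Ioc i n).image (rnk n c i) = Finset.range (n - i) := by
    apply Finset.eq_of_subset_of_card_le
    · intro v hv
      simp only [Finset.mem_image, Finset.mem_Ioc] at hv
      obtain ⟨j, hj, rfl⟩ := hv
      simp only [Finset.mem_range]
      exact rnk_lt hj.1 hj.2
    · rw [Finset.card_range, Finset.card_image_of_injOn (rnk_injOn n c i), Nat.card_Ioc]
  have h2 : ((Finset.Ioc i n).filter (fun j => rnk n c i j ≤ K)).image (rnk n c i)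
      = (Finset.range (n - i)).filter (fun v => v ≤ K) := by
    rw [← himg]
    exact (Finset.filter_image (p := fun v => v ≤ K)).symm
  have h3 : ((Finset.Ioc i n).filter (fun j => rnk n c i j ≤ K)).card
      = (((Finset.Ioc i n).filter (fun j => rnk n c i j ≤ K)).image (rnk n c i)).card := by
    rw [Finset.card_image_of_injOn ((rnk_injOn n c i).mono (by
      intro x hx
      simp only [Finset.coe_filter, Set.mem_setOf_eq, Finset.mem_Ioc] at hx
      simpa using hx.1))]
  rw [h3, h2]
  have : (Finset.range (n - i)).filter (fun v => v ≤ K) = Finset.range (K + 1) := by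
    ext v
    simp only [Finset.mem_filter, Finset.mem_range]
    omega
  rw [this, Finset.card_range]

lemma bool_ne_iff (x y z : Bool) (h : ¬ (y = z)) : (x = y ↔ ¬ (x = z)) := by
  cases x <;> cases y <;> cases z <;> simp_all

lemma Ioc_split {j n : ℕ} (hjn : j < n) :
    Finset.Ioc j n = insert n (Finset.Ioc j (n - 1)) := by
  ext l
  simp only [Finset.mem_Ioc, Finset.mem_insert]
  omega

lemma good (n k : ℕ) (c : ℕ → ℕ → Bool) (hk : 2 * k + 2 < n) {i j : ℕ}
    (hi1 : 1 ≤ i) (hik : i ≤ k + 1) (hj1 : i < j) (hj2 : j ≤ n)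
    (hr : rnk n c i j ≤ k + 1 - i) :
    j ≤ n - 1 ∧ kVal n c i j = kVal (n - 1) c i j ∧ kVal n c i j ≤ k := by
  set a := ((Finset.Ico 1 i).filter (fun l => c l j = c i j)).card with ha_def
  have ha : a ≤ i - 1 := by
    calc a ≤ (Finset.Ico 1 i).card := Finset.card_filter_le _ _
      _ = i - 1 := by rw [Nat.card_Ico]
  set b := ((Finset.Ioc j n).filter (fun l => c i l = c i j)).card with hb_def
  have hsn : sDeg n c i j = a + b := rfl
  have hdc := dc_le (n := n) c i j
  by_cases hD : c i j = c i n
  · -- same-colored case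
    have hrnk : j - i - 1 + dc n c i j ≤ k + 1 - i := by
      unfold rnk at hr; rw [if_pos hD] at hr; exact hr
    have hjk : j ≤ k + 2 := by omega
    have hjn : j < n := by omega
    have hdc2 : dc n c i j ≤ k + 2 - j := by omega
    -- b + dc = n - j
    have hbdc : b + dc n c i j = n - j := by
      have : b = ((Finset.Ioc j n).filter (fun l => c i l = c i n)).card := by
        rw [hb_def]
        congr 1
        apply Finset.filter_congr
        intro l _
        simp [hD]
      rw [this]
      unfold dc
      rw [Finset.card_filter_add_card_filter_not, Nat.card_Ioc]
    -- b₁ = b - 1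
    have hb1 : ((Finset.Ioc j (n - 1)).filter (fun l => c i l = c i j)).card + 1 = b := by
      rw [hb_def, Ioc_split hjn, Finset.filter_insert, if_pos hD.symm,
        Finset.card_insert_of_notMem]
      simp only [Finset.mem_filter, Finset.mem_Ioc]
      omega
    have hsn1 : sDeg (n - 1) c i j + 1 = a + b := by
      show (a + _) + 1 = _
      omega
    have hblb : n - k - 2 ≤ b := by omega
    have hbub : b ≤ n - j := by omega
    refine ⟨by omega, ?_, ?_⟩ <;> simp only [kVal, hsn] <;> omega
  · -- different-colored case
    have hjn1 : j ≤ n - 1 := by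
      rcases Nat.lt_or_ge j n with h | h
      · omega
      · exfalso; have : j = n := by omega
        rw [this] at hD; exact hD rfl
    have hjn : j < n := by omega
    have hrnk : dc n c i j ≤ k + 1 - i := by
      unfold rnk at hr; rw [if_neg hD] at hr; exact hr
    have hbd : b = dc n c i j := by
      rw [hb_def]
      unfold dc
      congr 1
      apply Finset.filter_congr
      intro l _
      exact bool_ne_iff _ _ _ hD
    have hbk : b ≤ k + 1 - i := by omega
    have hsk : a + b ≤ k := by omega
    have hb1 : ((Finset.Ioc j (n - 1)).filter (fun l => c i l = c i j)).card = b := by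
      rw [hb_def, Ioc_split hjn, Finset.filter_insert, if_neg (by
        intro h; exact hD h.symm)]
    have hsn1 : sDeg (n - 1) c i j = a + b := by
      show a + _ = _
      omega
    refine ⟨hjn1, ?_, ?_⟩ <;> simp only [kVal, hsn, hsn1] <;> omega

lemma sum_tri (m : ℕ) : ∑ t ∈ Finset.range m, (m - t) = (m + 1).choose 2 := by
  induction m with
  | zero => simp
  | succ m ih =>
    have e1 : ∑ t ∈ Finset.range m, (m + 1 - t) = ∑ t ∈ Finset.range m, ((m - t) + 1) :=
      Finset.sum_congr rfl (fun t ht => by simp at ht; omega)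
    rw [Finset.sum_range_succ, e1, Finset.sum_add_distrib, ih, Finset.sum_const,
      smul_eq_mul, Finset.card_range]
    have e2 : (m + 1 + 1).choose 2 = (m + 1).choose 1 + (m + 1).choose 2 :=
      Nat.choose_succ_succ (m + 1) 1
    rw [Nat.choose_one_right] at e2
    omega


end Inv8

/-- For `n ≥ 4` and `0 ≤ k < n/2 − 1`, `E_{≤k}(c,c₁) ≥ C(k+2,2)`,
where `c₁` is the restriction of `c` to the pairs with `j ≤ n−1`. -/
theorem invariant_leq_k_edges_lower_bound (n k : ℕ) (hn : 4 ≤ n) (hk : 2 * k + 2 < n)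
    (c : ℕ → ℕ → Bool) :
    (k + 2).choose 2 ≤ EleqInv n c k := by
  classical
  set G : Finset (ℕ × ℕ) := (Finset.range (k + 1)).biUnion (fun t =>
    ((Finset.Ioc (t + 1) n).filter (fun j => Inv8.rnk n c (t + 1) j ≤ k - t)).image
      (fun j => (t + 1, j))) with hG
  have hGsub : G ⊆ ((Finset.Icc 1 (n - 1)) ×ˢ (Finset.Icc 1 (n - 1))).filter
      (fun p => p.1 < p.2 ∧ kVal n c p.1 p.2 = kVal (n - 1) c p.1 p.2 ∧
        kVal n c p.1 p.2 ≤ k) := by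
    intro p hp
    simp only [hG, Finset.mem_biUnion, Finset.mem_image, Finset.mem_filter,
      Finset.mem_Ioc, Finset.mem_range] at hp
    obtain ⟨t, ht, j, ⟨⟨hj1, hj2⟩, hr⟩, rfl⟩ := hp
    have hr' : Inv8.rnk n c (t + 1) j ≤ k + 1 - (t + 1) := by omega
    obtain ⟨hjn1, heq, hle⟩ := Inv8.good n k c hk (by omega) (by omega) hj1 hj2 hr'
    simp only [Finset.mem_filter, Finset.mem_product, Finset.mem_Icc]
    exact ⟨⟨⟨by omega, by omega⟩, ⟨by omega, hjn1⟩⟩, hj1, heq, hle⟩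
  have hGcard : G.card = (k + 2).choose 2 := by
    rw [hG, Finset.card_biUnion]
    · have : ∀ t ∈ Finset.range (k + 1),
          (((Finset.Ioc (t + 1) n).filter (fun j => Inv8.rnk n c (t + 1) j ≤ k - t)).image
            (fun j => (t + 1, j))).card = (k - t) + 1 := by
        intro t ht
        rw [Finset.card_image_of_injective _ (fun a b h => by
          simpa using h)]
        exact Inv8.card_small n c (t + 1) (k - t) (by simp at ht; omega)
      rw [Finset.sum_congr rfl this]
      have h2 : ∀ t ∈ Finset.range (k + 1), (k - t) + 1 = (k + 1) - t := by
        intro t ht; simp at ht; omega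
      rw [Finset.sum_congr rfl h2, Inv8.sum_tri]
    · intro t _ t' _ htt
      rw [Function.onFun, Finset.disjoint_left]
      intro p hp hp'
      simp only [Finset.mem_image, Finset.mem_filter] at hp hp'
      obtain ⟨j, _, rfl⟩ := hp
      obtain ⟨j', _, hj'⟩ := hp'
      have := congrArg Prod.fst hj'
      simp only [Prod.fst] at this
      exact htt (by omega)
  calc (k + 2).choose 2 = G.card := hGcard.symm
    _ ≤ _ := Finset.card_le_card hGsub
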